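/- Let Y be a sublattice of an Archimedean vector lattice X and (x_n) a sequence in Y with x_n → 0 relatively uniformly in X. If (x_n) is relatively uniformly Cauchy in Y (with regulator in Y), then x_n → 0 relatively uniformly in Y. -/
import Mathlib


open Filter Set

section Defs

variable (X : Type*) [Lattice X] [AddCommGroup X] [Module ℝ X]

/-- Archimedean property for a vector lattice. -/
def VLArchimedean : Prop := ∀ x y : X, (∀ n : ℕ, n • x ≤ y) → x ≤ 0

variable {X}

/-- `Y` is a sublattice: a linear subspace closed under `⊔`. -/
def IsVLSublattice (Y : Set X) : Prop :=
  (0 : X) ∈ Y ∧ (∀ a ∈ Y, ∀ b ∈ Y, a + b ∈ Y) ∧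
    (∀ (c : ℝ), ∀ a ∈ Y, c • a ∈ Y) ∧ (∀ a ∈ Y, ∀ b ∈ Y, a ⊔ b ∈ Y)

/-- `Y` is majorizing in `X`. -/
def Majorizing (Y : Set X) : Prop := ∀ x : X, 0 ≤ x → ∃ y ∈ Y, x ≤ y

/-- Relative uniform convergence of a sequence with regulator `e`. -/
def RUTendsto (x : ℕ → X) (l e : X) : Prop :=
  0 ≤ e ∧ ∀ ε : ℝ, 0 < ε → ∃ N, ∀ n ≥ N, |x n - l| ≤ ε • e

/-- Relative uniform Cauchy sequence with regulator `e`. -/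
def RUCauchy (x : ℕ → X) (e : X) : Prop :=
  0 ≤ e ∧ ∀ ε : ℝ, 0 < ε → ∃ N, ∀ n ≥ N, ∀ m ≥ N, |x n - x m| ≤ ε • e

/-- Relative uniform convergence of a net with regulator `e`. -/
def RUTendstoNet {ι : Type*} [Preorder ι] (x : ι → X) (l e : X) : Prop :=
  0 ≤ e ∧ ∀ ε : ℝ, 0 < ε → ∃ α₀, ∀ α ≥ α₀, |x α - l| ≤ ε • e

/-- Relative uniform Cauchy net with regulator `e`. -/
def RUCauchyNet {ι : Type*} [Preorder ι] (x : ι → X) (e : X) : Prop :=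
  0 ≤ e ∧ ∀ ε : ℝ, 0 < ε → ∃ α₀, ∀ α ≥ α₀, ∀ β ≥ α₀, |x α - x β| ≤ ε • e

/-- Uniform adherence of a set: all relative uniform limits of sequences from `A`. -/
def uAdh (A : Set X) : Set X :=
  {l | ∃ x : ℕ → X, (∀ n, x n ∈ A) ∧ ∃ e, RUTendsto x l e}

/-- `A` is uniformly closed. -/
def RUClosed (A : Set X) : Prop := uAdh A ⊆ A

/-- Uniform closure: the least uniformly closed superset of `A`. -/
def uClosure (A : Set X) : Set X := ⋂₀ {B : Set X | A ⊆ B ∧ RUClosed B}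

variable (X)

/-- Relative uniform completeness (for sequences). -/
def RUComplete : Prop :=
  ∀ x : ℕ → X, (∃ e, RUCauchy x e) → ∃ l e, RUTendsto x l e

variable {X}

/-- Relative uniform completeness of a sublattice `Y` (regulators taken in `Y`). -/
def RUCompleteIn (Y : Set X) : Prop :=
  ∀ x : ℕ → X, (∀ n, x n ∈ Y) → (∃ e ∈ Y, RUCauchy x e) →
    ∃ l ∈ Y, ∃ e ∈ Y, RUTendsto x l e

/-- An (order) ideal of a vector lattice: a solid linear subspace. -/
def IsVLIdeal (I : Set X) : Prop :=
  (0 : X) ∈ I ∧ (∀ a ∈ I, ∀ b ∈ I, a + b ∈ I) ∧ (∀ (c : ℝ), ∀ a ∈ I, c • a ∈ I) ∧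
    ∀ x : X, ∀ y ∈ I, |x| ≤ |y| → x ∈ I

/-- The ideal generated by a set. -/
def idealGen (Y : Set X) : Set X := ⋂₀ {I : Set X | Y ⊆ I ∧ IsVLIdeal I}

/-- `B` is a projection band: an ideal along which the space decomposes. -/
def IsProjectionBand (B : Set X) : Prop :=
  IsVLIdeal B ∧ ∀ x : X, ∃ b ∈ B, ∃ d : X, (∀ y ∈ B, |d| ⊓ |y| = 0) ∧ x = b + d

end Defs
set_option maxHeartbeats 1000000 in
theorem ru_null_and_ru_cauchy_in_sublattice_implies_ru_null_in_sublattice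
    {X : Type*} [Lattice X] [AddCommGroup X] [Module ℝ X]
    [CovariantClass X X (· + ·) (· ≤ ·)] [PosSMulMono ℝ X]
    (harch : VLArchimedean X)
    {Y : Set X} (hY : IsVLSublattice Y)
    (x : ℕ → X) (hx : ∀ n, x n ∈ Y)
    (hconv : ∃ e, RUTendsto x 0 e)
    (hC : ∃ v ∈ Y, RUCauchy x v) :
    ∃ e ∈ Y, RUTendsto x 0 e := by
  obtain ⟨e, he, hconv⟩ := hconv
  obtain ⟨v, hvY, hv, hC⟩ := hC
  refine ⟨v, hvY, hv, ?_⟩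
  intro ε hε
  obtain ⟨N, hN⟩ := hC ε hε
  refine ⟨N, fun n hn => ?_⟩
  rw [sub_zero]
  -- show |x n| - ε • v ≤ 0 via the Archimedean property with regulator e
  have key : |x n| - ε • v ≤ 0 := by
    apply harch _ e
    intro k
    rcases Nat.eq_zero_or_pos k with hk | hk
    · simpa [hk] using he
    · have hkpos : (0:ℝ) < (k:ℝ) := by exact_mod_cast hk
      have h1 : |x n| - ε • v ≤ ((k:ℝ)⁻¹) • e := by
        obtain ⟨M, hM⟩ := hconv ((k:ℝ)⁻¹) (by positivity)
        set m := max N M with hm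
        have h2 : |x n - x m| ≤ ε • v := hN n hn m (le_max_left _ _)
        have h3 : |x m - 0| ≤ ((k:ℝ)⁻¹) • e := hM m (le_max_right _ _)
        rw [sub_zero] at h3
        have h4 : |x n| ≤ |x n - x m| + |x m| := by
          calc |x n| = |(x n - x m) + x m| := by rw [sub_add_cancel]
          _ ≤ |x n - x m| + |x m| := abs_add_le _ _
        have h5 : |x n| ≤ ε • v + ((k:ℝ)⁻¹) • e :=
          h4.trans (add_le_add h2 h3)
        exact sub_le_iff_le_add'.mpr h5
      have h6 : (k:ℝ) • (|x n| - ε • v) ≤ (k:ℝ) • (((k:ℝ)⁻¹) • e) :=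
        smul_le_smul_of_nonneg_left h1 hkpos.le
      rw [smul_smul, mul_inv_cancel₀ hkpos.ne', one_smul] at h6
      rwa [Nat.cast_smul_eq_nsmul] at h6
  exact sub_nonpos.mp key
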